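/- Let (S, I₁, I₂, I₁₂, R) be a solution of the coinfection model with all components nonnegative and S(0) > 0. Then for all t ≥ 0, S(t) ≤ 1 / ( (1/S**)(1 − e^{−(b−μ₀)t}) + (1/S(0)) e^{−(b−μ₀)t} ). In particular S(t) ≤ max{S**, S(0)} for all t ≥ 0, and limsup_{t→∞} S(t) ≤ S**. -/

import Mathlib

open Filter Topology

private lemma expAux (c t : ℝ) :
    HasDerivAt (fun x => Real.exp (c * x)) (c * Real.exp (c * t)) t := by
  simpa [Function.comp_def, mul_comm] using
    (Real.hasDerivAt_exp (c * t)).comp t ((hasDerivAt_id t).const_mul c)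

set_option maxHeartbeats 1000000 in
/-- For a nonnegative solution of the coinfection model with `S 0 > 0`,
`S t ≤ 1 / ((1/S**)(1 - e^{-(b-μ₀)t}) + (1/S 0) e^{-(b-μ₀)t})` for all `t ≥ 0`;
in particular `S t ≤ max S** (S 0)` and `limsup S ≤ S**`. -/
theorem stmt_0
    (b K α1 α2 α3 β1 β2 γ1 γ2 η1 η2 ρ1 ρ2 ρ3 μ0 μ1' μ2' μ3' μ4' : ℝ)
    (hb : 0 < b) (hK : 0 < K) (hα1 : 0 < α1) (hα2 : 0 < α2) (hα3 : 0 < α3)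
    (hβ1 : 0 < β1) (hβ2 : 0 < β2) (hγ1 : 0 < γ1) (hγ2 : 0 < γ2)
    (hη1 : 0 < η1) (hη2 : 0 < η2) (hρ1 : 0 < ρ1) (hρ2 : 0 < ρ2) (hρ3 : 0 < ρ3)
    (hμ0 : 0 < μ0) (hμ1' : 0 < μ1') (hμ2' : 0 < μ2') (hμ3' : 0 < μ3') (hμ4' : 0 < μ4')
    (hbμ0 : μ0 < b)
    (μ1 μ2 μ3 : ℝ) (hμ1 : μ1 = ρ1 + μ1') (hμ2 : μ2 = ρ2 + μ2') (hμ3 : μ3 = ρ3 + μ3')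
    (S I1 I2 I12 R N : ℝ → ℝ)
    (hN : ∀ t, N t = S t + I1 t + I2 t + I12 t + R t)
    (hS : ∀ t ≥ (0:ℝ), HasDerivAt S
      ((b * (1 - N t / K) - α1 * I1 t - α2 * I2 t - (β1 + β2 + α3) * I12 t - μ0) * S t) t)
    (hI1 : ∀ t ≥ (0:ℝ), HasDerivAt I1
      ((b * (1 - N t / K) + α1 * S t - η1 * I12 t - γ1 * I2 t - μ1) * I1 t
        + β1 * S t * I12 t) t)
    (hI2 : ∀ t ≥ (0:ℝ), HasDerivAt I2
      ((b * (1 - N t / K) + α2 * S t - η2 * I12 t - γ2 * I1 t - μ2) * I2 t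
        + β2 * S t * I12 t) t)
    (hI12 : ∀ t ≥ (0:ℝ), HasDerivAt I12
      ((b * (1 - N t / K) + α3 * S t + η1 * I1 t + η2 * I2 t - μ3) * I12 t
        + (γ1 + γ2) * I1 t * I2 t) t)
    (hR : ∀ t ≥ (0:ℝ), HasDerivAt R
      ((b * (1 - N t / K) - μ4') * R t + ρ1 * I1 t + ρ2 * I2 t + ρ3 * I12 t) t)
    (hnonneg : ∀ t ≥ (0:ℝ), 0 ≤ S t ∧ 0 ≤ I1 t ∧ 0 ≤ I2 t ∧ 0 ≤ I12 t ∧ 0 ≤ R t)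
    (hS0 : 0 < S 0)
    (Sss : ℝ) (hSss : Sss = K * (b - μ0) / b) :
    (∀ t ≥ (0:ℝ), S t ≤ 1 / ((1 / Sss) * (1 - Real.exp (-(b - μ0) * t))
        + (1 / S 0) * Real.exp (-(b - μ0) * t)))
    ∧ (∀ t ≥ (0:ℝ), S t ≤ max Sss (S 0))
    ∧ limsup S atTop ≤ Sss := by
  have hL : 0 < b - μ0 := sub_pos.mpr hbμ0
  have hSsspos : 0 < Sss := by
    rw [hSss]; positivity
  -- abbreviation for the coefficient in S'
  set A : ℝ → ℝ := fun t =>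
    b * (1 - N t / K) - α1 * I1 t - α2 * I2 t - (β1 + β2 + α3) * I12 t - μ0 with hA
  -- continuity of A on [0,∞)
  have contA : ∀ t ∈ Set.Ici (0:ℝ), ContinuousAt A t := by
    intro t ht
    have cI1 := (hI1 t ht).continuousAt
    have cI2 := (hI2 t ht).continuousAt
    have cI12 := (hI12 t ht).continuousAt
    have cR := (hR t ht).continuousAt
    have cS := (hS t ht).continuousAt
    have cN : ContinuousAt N t := by
      have hNe : N = fun u => S u + I1 u + I2 u + I12 u + R u := funext hN
      rw [hNe]
      exact (((cS.add cI1).add cI2).add cI12).add cR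
    exact ((((continuousAt_const.mul (continuousAt_const.sub (cN.div_const K))).sub
      (continuousAt_const.mul cI1)).sub (continuousAt_const.mul cI2)).sub
      (continuousAt_const.mul cI12)).sub continuousAt_const
  -- positivity of S
  have Spos : ∀ t ≥ (0:ℝ), 0 < S t := by
    intro t ht
    rcases eq_or_lt_of_le ht with h0 | h0
    · rwa [← h0]
    have hcont : ContinuousOn A (Set.Icc 0 t) := fun u hu =>
      (contA u hu.1).continuousWithinAt
    obtain ⟨C, hC⟩ := (isCompact_Icc).exists_bound_of_continuousOn hcont
    set v : ℝ → ℝ := fun u => S u * Real.exp (C * u) with hv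
    have hvd : ∀ u ∈ Set.Icc (0:ℝ) t,
        HasDerivAt v ((A u + C) * S u * Real.exp (C * u)) u := by
      intro u hu
      have h1 := expAux C u
      have h2 := (hS u hu.1).mul h1
      refine h2.congr_deriv ?_
      simp only [hA]
      ring
    have hmono : MonotoneOn v (Set.Icc 0 t) := by
      apply monotoneOn_of_deriv_nonneg (convex_Icc 0 t)
      · exact fun u hu => ((hvd u hu).continuousAt).continuousWithinAt
      · intro u hu
        rw [interior_Icc] at hu
        exact ((hvd u ⟨hu.1.le, hu.2.le⟩).differentiableAt).differentiableWithinAt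
      · intro u hu
        rw [interior_Icc] at hu
        have hu' : u ∈ Set.Icc (0:ℝ) t := ⟨hu.1.le, hu.2.le⟩
        rw [(hvd u hu').deriv]
        have hfC : 0 ≤ A u + C := by
          have h3 := hC u hu'
          have h4 : -C ≤ A u := neg_le_of_abs_le (by simpa using h3)
          linarith
        exact mul_nonneg (mul_nonneg hfC (hnonneg u hu'.1).1) (Real.exp_pos _).le
    have h5 : v 0 ≤ v t := hmono ⟨le_refl 0, ht⟩ ⟨ht, le_refl t⟩ ht
    have hv0 : v 0 = S 0 := by simp [hv]
    have hvt : v t = S t * Real.exp (C * t) := rfl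
    nlinarith [Real.exp_pos (C * t), (hnonneg t ht).1]
  -- main differential inequality function g
  set g : ℝ → ℝ := fun t =>
    Real.exp ((b - μ0) * t) * (S t)⁻¹ - (1 / Sss) * (Real.exp ((b - μ0) * t) - 1) with hg
  have hgd : ∀ t ∈ Set.Ici (0:ℝ), HasDerivAt g
      (((b - μ0) * Real.exp ((b - μ0) * t)) * (S t)⁻¹
        + Real.exp ((b - μ0) * t) * (-(A t * S t) / S t ^ 2)
        - (1 / Sss) * ((b - μ0) * Real.exp ((b - μ0) * t))) t := by
    intro t ht
    have hSt : S t ≠ 0 := (Spos t ht).ne'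
    have hexp := expAux (b - μ0) t
    have hinv : HasDerivAt (fun x => (S x)⁻¹) (-(A t * S t) / S t ^ 2) t :=
      (hS t ht).inv hSt
    exact (hexp.mul hinv).sub ((hexp.sub_const 1).const_mul (1 / Sss))
  have hgmono : MonotoneOn g (Set.Ici 0) := by
    apply monotoneOn_of_deriv_nonneg (convex_Ici 0)
    · exact fun u hu => ((hgd u hu).continuousAt).continuousWithinAt
    · intro u hu
      rw [interior_Ici] at hu
      exact ((hgd u (Set.mem_Ici.mpr (le_of_lt hu))).differentiableAt).differentiableWithinAt
    · intro u hu
      rw [interior_Ici] at hu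
      have hu' : (0:ℝ) ≤ u := hu.le
      rw [(hgd u hu').deriv]
      have hSu : 0 < S u := Spos u hu'
      have hE : 0 < Real.exp ((b - μ0) * u) := Real.exp_pos _
      -- key pointwise inequality
      have hkey : (b - μ0 - A u) * S u - (b / K) * S u ^ 2 ≥ 0 := by
        obtain ⟨h1, h2, h3, h4, h5⟩ := hnonneg u hu'
        have hNu : N u = S u + I1 u + I2 u + I12 u + R u := hN u
        have hAu : A u = b * (1 - N u / K) - α1 * I1 u - α2 * I2 u
            - (β1 + β2 + α3) * I12 u - μ0 := rfl
        have hbK : 0 < b / K := by positivity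
        have hNS : S u ≤ N u := by rw [hNu]; linarith
        have h6 : (b / K) * (S u * S u) ≤ (b / K) * (N u * S u) :=
          mul_le_mul_of_nonneg_left (mul_le_mul_of_nonneg_right hNS h1) hbK.le
        have hAeq : b - μ0 - A u = (b / K) * N u + α1 * I1 u + α2 * I2 u
            + (β1 + β2 + α3) * I12 u := by
          rw [hAu]
          ring
        rw [hAeq]
        nlinarith [mul_nonneg (mul_nonneg hα1.le h2) h1,
          mul_nonneg (mul_nonneg hα2.le h3) h1,
          mul_nonneg (mul_nonneg (by positivity : (0:ℝ) ≤ β1 + β2 + α3) h4) h1]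
      have hLS : (1 / Sss) * (b - μ0) = b / K := by
        have hb' : b ≠ 0 := hb.ne'
        have hK' : K ≠ 0 := hK.ne'
        have hL' : b - μ0 ≠ 0 := hL.ne'
        rw [hSss]
        field_simp
      have hSune : S u ≠ 0 := hSu.ne'
      have hSssne : Sss ≠ 0 := hSsspos.ne'
      have heq : ((b - μ0) * Real.exp ((b - μ0) * u)) * (S u)⁻¹
          + Real.exp ((b - μ0) * u) * (-(A u * S u) / S u ^ 2)
          - (1 / Sss) * ((b - μ0) * Real.exp ((b - μ0) * u))
          = Real.exp ((b - μ0) * u) / S u ^ 2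
            * ((b - μ0 - A u) * S u - (b / K) * S u ^ 2) := by
        rw [← hLS]
        field_simp
        ring
      rw [heq]
      exact mul_nonneg (by positivity) hkey
  -- the comparison bound
  have hDpos : ∀ t ≥ (0:ℝ), 0 < (1 / Sss) * (1 - Real.exp (-(b - μ0) * t))
      + (1 / S 0) * Real.exp (-(b - μ0) * t) := by
    intro t ht
    have h1 : Real.exp (-(b - μ0) * t) ≤ 1 :=
      Real.exp_le_one_iff.mpr (by nlinarith [mul_nonneg hL.le ht])
    have h2 : 0 < Real.exp (-(b - μ0) * t) := Real.exp_pos _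
    have h3 : 0 ≤ (1 / Sss) * (1 - Real.exp (-(b - μ0) * t)) :=
      mul_nonneg (by positivity) (by linarith)
    have h4 : 0 < (1 / S 0) * Real.exp (-(b - μ0) * t) := by positivity
    linarith
  have hmain : ∀ t ≥ (0:ℝ), (1 / Sss) * (1 - Real.exp (-(b - μ0) * t))
      + (1 / S 0) * Real.exp (-(b - μ0) * t) ≤ (S t)⁻¹ := by
    intro t ht
    have h5 : g 0 ≤ g t := hgmono Set.self_mem_Ici ht ht
    have hg0 : g 0 = (S 0)⁻¹ := by simp [hg]
    have hgt : g t = Real.exp ((b - μ0) * t) * (S t)⁻¹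
        - (1 / Sss) * (Real.exp ((b - μ0) * t) - 1) := rfl
    rw [hg0, hgt] at h5
    have hE : 0 < Real.exp ((b - μ0) * t) := Real.exp_pos _
    have hEneg : Real.exp (-(b - μ0) * t) = (Real.exp ((b - μ0) * t))⁻¹ := by
      rw [← Real.exp_neg]; ring_nf
    rw [hEneg]
    simp only [one_div] at h5 ⊢
    have hStne : S t ≠ 0 := (Spos t ht).ne'
    have hSssne : Sss ≠ 0 := hSsspos.ne'
    have h7 := mul_le_mul_of_nonneg_right h5 (inv_pos.mpr hE).le
    have h8 : (Real.exp ((b - μ0) * t) * (S t)⁻¹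
          - Sss⁻¹ * (Real.exp ((b - μ0) * t) - 1)) * (Real.exp ((b - μ0) * t))⁻¹
        = (S t)⁻¹ - Sss⁻¹ * (1 - (Real.exp ((b - μ0) * t))⁻¹) := by
      field_simp
    rw [h8] at h7
    linarith
  have hfirst : ∀ t ≥ (0:ℝ), S t ≤ 1 / ((1 / Sss) * (1 - Real.exp (-(b - μ0) * t))
      + (1 / S 0) * Real.exp (-(b - μ0) * t)) := by
    intro t ht
    rw [le_div_iff₀ (hDpos t ht)]
    have h6 := mul_le_mul_of_nonneg_left (hmain t ht) (Spos t ht).le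
    rwa [mul_inv_cancel₀ (Spos t ht).ne'] at h6
  refine ⟨hfirst, ?_, ?_⟩
  · -- S t ≤ max Sss (S 0)
    intro t ht
    set m := max Sss (S 0) with hm
    have hmpos : 0 < m := lt_max_of_lt_left hSsspos
    have h1 : 1 / m ≤ 1 / Sss := one_div_le_one_div_of_le hSsspos (le_max_left _ _)
    have h2 : 1 / m ≤ 1 / S 0 := one_div_le_one_div_of_le hS0 (le_max_right _ _)
    have hE1 : Real.exp (-(b - μ0) * t) ≤ 1 :=
      Real.exp_le_one_iff.mpr (by nlinarith [mul_nonneg hL.le ht])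
    have hE0 : 0 < Real.exp (-(b - μ0) * t) := Real.exp_pos _
    have hDm : 1 / m ≤ (1 / Sss) * (1 - Real.exp (-(b - μ0) * t))
        + (1 / S 0) * Real.exp (-(b - μ0) * t) := by
      have ha := mul_le_mul_of_nonneg_right h1
        (by linarith : (0:ℝ) ≤ 1 - Real.exp (-(b - μ0) * t))
      have hb := mul_le_mul_of_nonneg_right h2 hE0.le
      linarith
    calc S t ≤ 1 / ((1 / Sss) * (1 - Real.exp (-(b - μ0) * t))
        + (1 / S 0) * Real.exp (-(b - μ0) * t)) := hfirst t ht
      _ ≤ 1 / (1 / m) := one_div_le_one_div_of_le (by positivity) hDm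
      _ = m := one_div_one_div m
  · -- limsup
    have hexp0 : Tendsto (fun t : ℝ => Real.exp (-(b - μ0) * t)) atTop (𝓝 0) := by
      have h1 : Tendsto (fun t : ℝ => (b - μ0) * t) atTop atTop :=
        Tendsto.const_mul_atTop hL tendsto_id
      have h2 := Real.tendsto_exp_neg_atTop_nhds_zero.comp h1
      exact h2.congr fun t => by simp only [Function.comp_apply]; congr 1; ring
    have hDtend : Tendsto (fun t => (1 / Sss) * (1 - Real.exp (-(b - μ0) * t))
        + (1 / S 0) * Real.exp (-(b - μ0) * t)) atTop (𝓝 (1 / Sss)) := by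
      have hone : Tendsto (fun _ : ℝ => (1:ℝ)) atTop (𝓝 1) := tendsto_const_nhds
      have h3 := (hone.sub hexp0).const_mul (1 / Sss)
      have h4 := hexp0.const_mul (1 / S 0)
      have h5 := h3.add h4
      simpa using h5
    have hinvtend : Tendsto (fun t => 1 / ((1 / Sss) * (1 - Real.exp (-(b - μ0) * t))
        + (1 / S 0) * Real.exp (-(b - μ0) * t))) atTop (𝓝 Sss) := by
      have := hDtend.inv₀ (by positivity : (1 / Sss) ≠ 0)
      simpa [one_div] using this
    have hle : S ≤ᶠ[atTop] fun t => 1 / ((1 / Sss) * (1 - Real.exp (-(b - μ0) * t))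
        + (1 / S 0) * Real.exp (-(b - μ0) * t)) := by
      filter_upwards [eventually_ge_atTop (0:ℝ)] with t ht using hfirst t ht
    have hcb : IsCoboundedUnder (· ≤ ·) atTop S := by
      apply Filter.IsBoundedUnder.isCoboundedUnder_le
      refine ⟨0, ?_⟩
      rw [eventually_map]
      filter_upwards [eventually_ge_atTop (0:ℝ)] with t ht using (hnonneg t ht).1
    have hbd : IsBoundedUnder (· ≤ ·) atTop (fun t => 1 / ((1 / Sss) * (1 - Real.exp (-(b - μ0) * t))
        + (1 / S 0) * Real.exp (-(b - μ0) * t))) := hinvtend.isBoundedUnder_le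
    calc limsup S atTop ≤ _ := limsup_le_limsup hle hcb hbd
      _ = Sss := hinvtend.limsup_eq
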